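/- Let ε1, ε2 ∈ (0,1), k ≥ 1, Δ_D, Δ_QT ≥ 0, let P ⊂ ℝ^d be finite nonempty with |P| = n, let X, X* ⊂ ℝ^d with |X| = |X*| = k, and let π1 : ℝ^d → ℝ^{d'} be a map. Suppose: (i) (1/(1+ε1)²)·cost(P,X) ≤ cost(π1(P),π1(X)) ≤ (1+ε1)²·cost(P,X), and likewise with X* in place of X; (ii) there are S' ⊂ ℝ^{d'} finite nonempty, w : S' → [0,∞) with Σ_{q∈S'} w(q) = n, and Δ ∈ ℝ such that (1−ε2)²·cost(π1(P),Y) ≤ cost((S',0,w),Y) + Δ ≤ (1+ε2)²·cost(π1(P),Y) for every finite nonempty Y ⊂ ℝ^{d'} with |Y| ≤ k; (iii) Γ : S' → ℝ^{d'} satisfies ‖q − Γ(q)‖ ≤ Δ_QT for every q ∈ S', and ‖q−y‖ ≤ Δ_D and ‖Γ(q)−y‖ ≤ Δ_D for every q ∈ S' and every y ∈ π1(X) ∪ π1(X*); (iv) X' := π1(X) satisfies cost((Γ(S'),0,w),X') ≤ cost((Γ(S'),0,w),Y) for every finite nonempty Y ⊂ ℝ^{d'} with |Y| ≤ k. Then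 cost(P,X) ≤ ((1+ε1)^4·(1+ε2)²/(1−ε2)²)·cost(P,X*) + ((1+ε1)²/(1−ε2)²)·4·n·Δ_D·Δ_QT. (Theorem 13, part 4: the quantization-added distributed JL+BKLW algorithm, conditioned on the JL and BKLW events.) -/
import Mathlib


open scoped BigOperators

abbrev Pt (d : ℕ) : Type := EuclideanSpace ℝ (Fin d)

/-- Per-point k-means cost: `min_{y ∈ Y} ‖p - y‖²`. -/
noncomputable def ptCost {F : Type*} [NormedAddCommGroup F] (p : F) (Y : Set F) : ℝ :=
  sInf ((fun y => ‖p - y‖ ^ 2) '' Y)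

/-- Projected k-means cost: `∑_{p ∈ P} min_{y ∈ Y} ‖π(p) - y‖²` (sum indexed by points of `P`). -/
noncomputable def projCost {E F : Type*} [NormedAddCommGroup F]
    (π : E → F) (P : Finset E) (Y : Set F) : ℝ :=
  ∑ p ∈ P, ptCost (π p) Y

/-- k-means cost: `∑_{p ∈ P} min_{x ∈ X} ‖p - x‖²`. -/
noncomputable def kmeansCost {F : Type*} [NormedAddCommGroup F]
    (P : Finset F) (X : Set F) : ℝ :=
  ∑ p ∈ P, ptCost p X

/-- Coreset cost (possibly after applying a map `π` to the coreset points):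
`∑_{q ∈ S} w(q) · min_{y ∈ Y} ‖π(q) - y‖² + Δ`. -/
noncomputable def coresetCost {E F : Type*} [NormedAddCommGroup F]
    (S : Finset E) (Δ : ℝ) (w : E → ℝ) (π : E → F) (Y : Set F) : ℝ :=
  (∑ q ∈ S, w q * ptCost (π q) Y) + Δ

lemma ptCost_bdd {F : Type*} [NormedAddCommGroup F] (p : F) (Y : Set F) :
    BddBelow ((fun y => ‖p - y‖ ^ 2) '' Y) := by
  exact ⟨0, by rintro x ⟨y, _, rfl⟩; positivity⟩

lemma ptCost_le_of_mem {F : Type*} [NormedAddCommGroup F] {p y : F} {Y : Set F}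
    (hy : y ∈ Y) : ptCost p Y ≤ ‖p - y‖ ^ 2 :=
  csInf_le (ptCost_bdd p Y) ⟨y, hy, rfl⟩

lemma ptCost_attained {F : Type*} [NormedAddCommGroup F] (p : F) {Y : Set F}
    (hne : Y.Nonempty) (hfin : Y.Finite) : ∃ y ∈ Y, ptCost p Y = ‖p - y‖ ^ 2 := by
  have h := Set.Nonempty.csInf_mem (hne.image (fun y => ‖p - y‖ ^ 2))
    (hfin.image (fun y => ‖p - y‖ ^ 2))
  obtain ⟨y, hy, he⟩ := h
  exact ⟨y, hy, he.symm⟩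

lemma ptCost_compare {F : Type*} [NormedAddCommGroup F] {p p' : F} {Y : Set F}
    {ΔD ΔQT : ℝ}
    (hne : Y.Nonempty) (hfin : Y.Finite)
    (hq : ‖p - p'‖ ≤ ΔQT)
    (hbd : ∀ y ∈ Y, ‖p - y‖ ≤ ΔD ∧ ‖p' - y‖ ≤ ΔD) :
    ptCost p Y ≤ ptCost p' Y + 2 * ΔD * ΔQT := by
  obtain ⟨y, hy, he⟩ := ptCost_attained p' hne hfin
  have h1 : ptCost p Y ≤ ‖p - y‖ ^ 2 := ptCost_le_of_mem hy
  have h2 : |‖p - y‖ - ‖p' - y‖| ≤ ‖p - p'‖ := abs_norm_sub_norm_le _ _ |>.trans_eq (by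
    congr 1; abel)
  obtain ⟨hb1, hb2⟩ := hbd y hy
  have hn1 : 0 ≤ ‖p - y‖ := norm_nonneg _
  have hn2 : 0 ≤ ‖p' - y‖ := norm_nonneg _
  have habs := abs_le.mp h2
  nlinarith [habs.1, habs.2]

lemma sum_compare {d' : ℕ} (S' : Finset (Pt d')) (w : Pt d' → ℝ)
    (hw : ∀ q ∈ S', 0 ≤ w q) {ΔD ΔQT : ℝ} (f g : Pt d' → Pt d') {Y : Set (Pt d')}
    (hne : Y.Nonempty) (hfin : Y.Finite)
    (hq : ∀ q ∈ S', ‖f q - g q‖ ≤ ΔQT)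
    (hbd : ∀ q ∈ S', ∀ y ∈ Y, ‖f q - y‖ ≤ ΔD ∧ ‖g q - y‖ ≤ ΔD) :
    ∑ q ∈ S', w q * ptCost (f q) Y ≤
      (∑ q ∈ S', w q * ptCost (g q) Y) + (∑ q ∈ S', w q) * (2 * ΔD * ΔQT) := by
  calc ∑ q ∈ S', w q * ptCost (f q) Y
      ≤ ∑ q ∈ S', w q * (ptCost (g q) Y + 2 * ΔD * ΔQT) := by
        refine Finset.sum_le_sum fun q hqS => ?_
        exact mul_le_mul_of_nonneg_left
          (ptCost_compare hne hfin (hq q hqS) (hbd q hqS)) (hw q hqS)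
    _ = (∑ q ∈ S', w q * ptCost (g q) Y) + (∑ q ∈ S', w q) * (2 * ΔD * ΔQT) := by
        simp [mul_add, Finset.sum_add_distrib, Finset.sum_mul]

theorem stmt14 {d d' k n : ℕ} (hk : 1 ≤ k) {ε1 ε2 : ℝ}
    (hε10 : 0 < ε1) (hε11 : ε1 < 1) (hε20 : 0 < ε2) (hε21 : ε2 < 1)
    (ΔD ΔQT : ℝ) (hΔD : 0 ≤ ΔD) (hΔQT : 0 ≤ ΔQT)
    (P : Finset (Pt d)) (hP : P.Nonempty) (hn : P.card = n)
    (X Xstar : Finset (Pt d)) (hX : X.card = k) (hXstar : Xstar.card = k)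
    (π1 : Pt d → Pt d')
    (hJLX : (1 / (1 + ε1) ^ 2) * kmeansCost P (X : Set (Pt d)) ≤
        projCost π1 P (π1 '' (X : Set (Pt d))) ∧
      projCost π1 P (π1 '' (X : Set (Pt d))) ≤
        (1 + ε1) ^ 2 * kmeansCost P (X : Set (Pt d)))
    (hJLXstar : (1 / (1 + ε1) ^ 2) * kmeansCost P (Xstar : Set (Pt d)) ≤
        projCost π1 P (π1 '' (Xstar : Set (Pt d))) ∧
      projCost π1 P (π1 '' (Xstar : Set (Pt d))) ≤
        (1 + ε1) ^ 2 * kmeansCost P (Xstar : Set (Pt d)))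
    (S' : Finset (Pt d')) (hS' : S'.Nonempty) (w : Pt d' → ℝ) (Δ : ℝ)
    (hw : ∀ q ∈ S', 0 ≤ w q) (hwsum : (∑ q ∈ S', w q) = (n : ℝ))
    (hBKLW : ∀ Y : Finset (Pt d'), Y.Nonempty → Y.card ≤ k →
      (1 - ε2) ^ 2 * projCost π1 P (Y : Set (Pt d')) ≤
          coresetCost S' 0 w id (Y : Set (Pt d')) + Δ ∧
      coresetCost S' 0 w id (Y : Set (Pt d')) + Δ ≤
          (1 + ε2) ^ 2 * projCost π1 P (Y : Set (Pt d')))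
    (Γ : Pt d' → Pt d')
    (hΓ : ∀ q ∈ S', ‖q - Γ q‖ ≤ ΔQT)
    (hdiam : ∀ q ∈ S', ∀ y ∈ (π1 '' (X : Set (Pt d)) ∪ π1 '' (Xstar : Set (Pt d))),
      ‖q - y‖ ≤ ΔD ∧ ‖Γ q - y‖ ≤ ΔD)
    (hopt : ∀ Y : Finset (Pt d'), Y.Nonempty → Y.card ≤ k →
      coresetCost S' 0 w Γ (π1 '' (X : Set (Pt d))) ≤
        coresetCost S' 0 w Γ (Y : Set (Pt d'))) :
    kmeansCost P (X : Set (Pt d)) ≤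
      ((1 + ε1) ^ 4 * (1 + ε2) ^ 2 / (1 - ε2) ^ 2) * kmeansCost P (Xstar : Set (Pt d)) +
        ((1 + ε1) ^ 2 / (1 - ε2) ^ 2) * (4 * (n : ℝ) * ΔD * ΔQT) := by
  classical
  have hc1 : (0 : ℝ) < (1 + ε1) ^ 2 := by positivity
  have hc2 : (0 : ℝ) < (1 - ε2) ^ 2 := by
    have : (0:ℝ) < 1 - ε2 := by linarith
    positivity
  -- the projected centers as finsets
  set FX := X.image π1 with hFXdef
  set FXs := Xstar.image π1 with hFXsdef
  have hXne : X.Nonempty := Finset.card_pos.mp (by omega)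
  have hXsne : Xstar.Nonempty := Finset.card_pos.mp (by omega)
  have hFXne : FX.Nonempty := hXne.image π1
  have hFXsne : FXs.Nonempty := hXsne.image π1
  have hFXcard : FX.card ≤ k := le_trans (Finset.card_image_le) hX.le
  have hFXscard : FXs.card ≤ k := le_trans (Finset.card_image_le) hXstar.le
  have hcoeX : (FX : Set (Pt d')) = π1 '' (X : Set (Pt d)) := Finset.coe_image
  have hcoeXs : (FXs : Set (Pt d')) = π1 '' (Xstar : Set (Pt d)) := Finset.coe_image
  -- set abbreviations
  set YX : Set (Pt d') := π1 '' (X : Set (Pt d)) with hYX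
  set YXs : Set (Pt d') := π1 '' (Xstar : Set (Pt d)) with hYXs
  have hYXne : YX.Nonempty := by rw [← hcoeX]; exact_mod_cast hFXne
  have hYXsne : YXs.Nonempty := by rw [← hcoeXs]; exact_mod_cast hFXsne
  have hYXfin : YX.Finite := by rw [← hcoeX]; exact FX.finite_toSet
  have hYXsfin : YXs.Finite := by rw [← hcoeXs]; exact FXs.finite_toSet
  -- BKLW at YX and YXs
  have hBX := hBKLW FX hFXne hFXcard
  have hBXs := hBKLW FXs hFXsne hFXscard
  rw [hcoeX] at hBX
  rw [hcoeXs] at hBXs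
  -- JL: cost(P,X) ≤ (1+ε1)^2 projCost
  have hA : kmeansCost P (X : Set (Pt d)) ≤ (1 + ε1) ^ 2 * projCost π1 P YX := by
    have h := hJLX.1
    rw [one_div, inv_mul_le_iff₀ hc1] at h
    exact h
  -- coreset with id vs coreset with Γ, at YX
  have h1 : (∑ q ∈ S', w q * ptCost (q) YX) ≤
      (∑ q ∈ S', w q * ptCost (Γ q) YX) + (n : ℝ) * (2 * ΔD * ΔQT) := by
    have := sum_compare S' w hw (fun q => q) Γ hYXne hYXfin hΓ
      (fun q hq y hy => hdiam q hq y (Set.mem_union_left _ hy))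
    rwa [hwsum] at this
  -- coreset with Γ vs coreset with id, at YXs
  have h2 : (∑ q ∈ S', w q * ptCost (Γ q) YXs) ≤
      (∑ q ∈ S', w q * ptCost (q) YXs) + (n : ℝ) * (2 * ΔD * ΔQT) := by
    have := sum_compare S' w hw Γ (fun q => q) hYXsne hYXsfin
      (fun q hq => by rw [norm_sub_rev]; exact hΓ q hq)
      (fun q hq y hy => (hdiam q hq y (Set.mem_union_right _ hy)).symm)
    rwa [hwsum] at this
  -- optimality
  have h3 : coresetCost S' 0 w Γ YX ≤ coresetCost S' 0 w Γ YXs := by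
    have := hopt FXs hFXsne hFXscard
    rwa [hcoeXs] at this
  -- unfold coresetCost in hBX, hBXs, h3
  simp only [coresetCost, add_zero, id] at hBX hBXs h3
  -- chain
  have hchain : (1 - ε2) ^ 2 * projCost π1 P YX ≤
      (1 + ε2) ^ 2 * ((1 + ε1) ^ 2 * kmeansCost P (Xstar : Set (Pt d))) +
        (n : ℝ) * (4 * ΔD * ΔQT) := by
    have hB1 := hBX.1
    have hB2 := hBXs.2
    have hJ := hJLXstar.2
    have hε2pos : (0 : ℝ) < (1 + ε2) ^ 2 := by positivity
    nlinarith [mul_le_mul_of_nonneg_left hJ (le_of_lt hε2pos)]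
  -- combine with hA and divide by (1-ε2)^2
  have hkey : (1 - ε2) ^ 2 * kmeansCost P (X : Set (Pt d)) ≤
      (1 + ε1) ^ 2 * ((1 + ε2) ^ 2 * ((1 + ε1) ^ 2 * kmeansCost P (Xstar : Set (Pt d))) +
        (n : ℝ) * (4 * ΔD * ΔQT)) := by
    calc (1 - ε2) ^ 2 * kmeansCost P (X : Set (Pt d))
        ≤ (1 - ε2) ^ 2 * ((1 + ε1) ^ 2 * projCost π1 P YX) :=
          mul_le_mul_of_nonneg_left hA (le_of_lt hc2)
      _ = (1 + ε1) ^ 2 * ((1 - ε2) ^ 2 * projCost π1 P YX) := by ring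
      _ ≤ (1 + ε1) ^ 2 * ((1 + ε2) ^ 2 * ((1 + ε1) ^ 2 * kmeansCost P (Xstar : Set (Pt d))) +
            (n : ℝ) * (4 * ΔD * ΔQT)) :=
          mul_le_mul_of_nonneg_left hchain (le_of_lt hc1)
  rw [div_mul_eq_mul_div, div_mul_eq_mul_div, ← add_div, le_div_iff₀ hc2]
  nlinarith [hkey]
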